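/- For any multi-set [i,j,k] of species and the block structure of R ⊗ I_N and I_N ⊗ R restricted to rows/columns indexed by permutations of [i,j,k]: when i = j > k, the restricted Yang–Baxter identity holds: the product of the three 3×3 matrices [[S_{γβ}(k),T_{γβ}(k),0],[0,-1,0],[0,0,S_{γβ}(i)]], [[S_{γα}(i),0,0],[0,S_{γα}(k),T_{γα}(k)],[0,0,-1]], [[S_{βα}(k),T_{βα}(k),0],[0,-1,0],[0,0,S_{βα}(i)]] equals the product [[S_{βα}(i),0,0],[0,S_{βα}(k),T_{βα}(k)],[0,0,-1]], [[S_{γα}(k),T_{γα}(k),0],[0,-1,0],[0,0,S_{γα}(i)]], [[S_{γβ}(i),0,0],[0,S_{γβ}(k),T_{γβ}(k)],[0,0,-1]]. -/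

import Mathlib

noncomputable def S3 (b u v : ℂ) : ℂ := -(1 - b * u) / (1 - b * v)
noncomputable def T3 (b u v : ℂ) : ℂ := b * (u - v) / (1 - b * v)

set_option maxHeartbeats 4000000 in
/-- Yang–Baxter-type identity for the 3×3 blocks (case i = j > k). -/
theorem stmt_19 {i k : ℕ} (hik : k < i) (b : ℕ → ℂ) (bi bk : ℂ) (hbi : bi = b i) (hbk : bk = b k) (ξα ξβ ξγ : ℂ)
    -- ξα ξβ ξγ : ℂ)
    (hiα : 1 - bi * ξα ≠ 0) (hiβ : 1 - bi * ξβ ≠ 0) (hiγ : 1 - bi * ξγ ≠ 0)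
    (hkα : 1 - bk * ξα ≠ 0) (hkβ : 1 - bk * ξβ ≠ 0) (hkγ : 1 - bk * ξγ ≠ 0) :
    !![S3 bk ξγ ξβ, T3 bk ξγ ξβ, 0; 0, -1, 0; 0, 0, S3 bi ξγ ξβ] *
    !![S3 bi ξγ ξα, 0, 0; 0, S3 bk ξγ ξα, T3 bk ξγ ξα; 0, 0, -1] *
    !![S3 bk ξβ ξα, T3 bk ξβ ξα, 0; 0, -1, 0; 0, 0, S3 bi ξβ ξα] =
    !![S3 bi ξβ ξα, 0, 0; 0, S3 bk ξβ ξα, T3 bk ξβ ξα; 0, 0, -1] *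
    !![S3 bk ξγ ξα, T3 bk ξγ ξα, 0; 0, -1, 0; 0, 0, S3 bi ξγ ξα] *
    !![S3 bi ξγ ξβ, 0, 0; 0, S3 bk ξγ ξβ, T3 bk ξγ ξβ; 0, 0, -1] := by
  rw [Matrix.mul_fin_three, Matrix.mul_fin_three, Matrix.mul_fin_three, Matrix.mul_fin_three]
  simp only [S3, T3, mul_zero, zero_mul, add_zero, zero_add, mul_one, one_mul,
    mul_neg, neg_mul, neg_neg]
  ext r c
  fin_cases r <;> fin_cases c <;>
    simp only [Matrix.cons_val', Matrix.cons_val_zero, Matrix.cons_val_one, Matrix.head_cons,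
      Matrix.head_fin_const, Matrix.cons_val_fin_one, Matrix.empty_val', Fin.mk_zero, Fin.mk_one,
      Matrix.of_apply, Fin.isValue, Matrix.cons_val_two, Matrix.tail_cons, Fin.reduceFinMk] <;>
    field_simp <;> ring_nf <;> field_simp <;> ring
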